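/- Let V_t be the value-iteration iterates (V_0 ≡ 0, V_{t+1}(S) = c(S) + min{(K_0 V_t)(S), (K_1 V_t)(S)}) and define ΔV_t(S) = (K_1 V_t)(S) − (K_0 V_t)(S). Then for every t ≥ 0, every battery level e ∈ {0,...,E_max}, and every source state X ∈ {0,1}, one has ΔV_t(e, X, 0) ≥ 0; that is, when the VIA equals 0, not transmitting is an optimal action (since transmission only consumes energy without affecting the VIA). -/

import Mathlib

open Finset

namespace VIA

/-- The MDP state space: battery level, source state, VIA value. -/
abbrev State (Emax Dmax : ℕ) := Fin (Emax + 1) × Bool × Fin (Dmax + 1)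

/-- Deterministic next state given the action `a`, energy arrival `b`,
source-flip indicator `f`, and channel-success indicator `h`. -/
def nextState (Emax Dmax : ℕ) (s : State Emax Dmax) (a b f h : Bool) :
    State Emax Dmax :=
  let act : Bool := a && decide (0 < s.1.val)
  -- a successful transmission requires transmitting and channel success
  let succ : Bool := act && h
  (⟨min (s.1.val + (if b then 1 else 0) - (if act then 1 else 0)) Emax,
      Nat.lt_succ_of_le (min_le_right _ _)⟩,
   (if f then !s.2.1 else s.2.1),
   ⟨min (if succ then (if f then 1 else 0)
         else (if f then s.2.2.val + 1 else s.2.2.val)) Dmax,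
      Nat.lt_succ_of_le (min_le_right _ _)⟩)

/-- Bernoulli weight: probability `x` for `true`, `1 - x` for `false`. -/
def bern (x : ℝ) : Bool → ℝ := fun b => if b then x else 1 - x

/-- The transition kernel `K_a(s, s')` of the MDP, for action `a`
(`a = true` means transmit).  The source flips with probability `p`
from state `0 = false` and with probability `q` from state `1 = true`;
energy arrives with probability `β`; a transmission succeeds with
probability `ps`. -/
def K (Emax Dmax : ℕ) (p q β ps : ℝ) (a : Bool) (s s' : State Emax Dmax) : ℝ :=
  ∑ b : Bool, ∑ f : Bool, ∑ h : Bool,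
    bern β b * bern (if s.2.1 then q else p) f * bern ps h *
      (if nextState Emax Dmax s a b f h = s' then 1 else 0)

/-- The per-stage cost: the VIA value. -/
def cost (Emax Dmax : ℕ) (s : State Emax Dmax) : ℝ := s.2.2.val

/-- `(K_a V)(s) = ∑_{s'} K_a(s,s') V(s')`. -/
def KV (Emax Dmax : ℕ) (p q β ps : ℝ) (a : Bool) (V : State Emax Dmax → ℝ)
    (s : State Emax Dmax) : ℝ :=
  ∑ s' : State Emax Dmax, K Emax Dmax p q β ps a s s' * V s'

/-- Value iteration: `V_0 ≡ 0`,
`V_{t+1}(s) = c(s) + min{(K_0 V_t)(s), (K_1 V_t)(s)}`. -/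
def Viter (Emax Dmax : ℕ) (p q β ps : ℝ) : ℕ → State Emax Dmax → ℝ
  | 0 => fun _ => 0
  | t + 1 => fun s =>
      cost Emax Dmax s +
        min (KV Emax Dmax p q β ps false (Viter Emax Dmax p q β ps t) s)
            (KV Emax Dmax p q β ps true (Viter Emax Dmax p q β ps t) s)

/-- `ΔV_t(s) = (K_1 V_t)(s) − (K_0 V_t)(s)`. -/
def dV (Emax Dmax : ℕ) (p q β ps : ℝ) (t : ℕ) (s : State Emax Dmax) : ℝ :=
  KV Emax Dmax p q β ps true (Viter Emax Dmax p q β ps t) s -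
    KV Emax Dmax p q β ps false (Viter Emax Dmax p q β ps t) s


lemma bern_nonneg {x : ℝ} (h0 : 0 ≤ x) (h1 : x ≤ 1) (b : Bool) : 0 ≤ bern x b := by
  cases b <;> simp [bern] <;> linarith

lemma KV_eq (Emax Dmax : ℕ) (p q β ps : ℝ) (a : Bool) (V : State Emax Dmax → ℝ)
    (s : State Emax Dmax) :
    KV Emax Dmax p q β ps a V s =
      ∑ b : Bool, ∑ f : Bool, ∑ h : Bool,
        bern β b * bern (if s.2.1 then q else p) f * bern ps h *
          V (nextState Emax Dmax s a b f h) := by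
  unfold KV K
  simp only [Finset.sum_mul]
  rw [Finset.sum_comm]
  refine Finset.sum_congr rfl fun b _ => ?_
  rw [Finset.sum_comm]
  refine Finset.sum_congr rfl fun f _ => ?_
  rw [Finset.sum_comm]
  refine Finset.sum_congr rfl fun h _ => ?_
  rw [Finset.sum_eq_single (nextState Emax Dmax s a b f h)]
  · simp
  · intro s' _ hs'; simp [Ne.symm hs']
  · simp

lemma KV_le_of (Emax Dmax : ℕ) (p q β ps : ℝ)
    (hp0 : 0 ≤ p) (hp1 : p ≤ 1) (hq0 : 0 ≤ q) (hq1 : q ≤ 1)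
    (hβ0 : 0 ≤ β) (hβ1 : β ≤ 1) (hps0 : 0 ≤ ps) (hps1 : ps ≤ 1)
    (V : State Emax Dmax → ℝ)
    (hV : ∀ (e1 e2 : Fin (Emax+1)) (X : Bool) (D : Fin (Dmax+1)),
      e1.val ≤ e2.val → V (e2, X, D) ≤ V (e1, X, D))
    (a : Bool) (e1 e2 : Fin (Emax+1)) (X : Bool) (D : Fin (Dmax+1))
    (hle : e1.val ≤ e2.val) (hact : a = false ∨ 0 < e1.val) :
    KV Emax Dmax p q β ps a V (e2, X, D) ≤ KV Emax Dmax p q β ps a V (e1, X, D) := by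
  rw [KV_eq, KV_eq]
  refine Finset.sum_le_sum fun b _ => Finset.sum_le_sum fun f _ =>
    Finset.sum_le_sum fun h _ => ?_
  have hw : 0 ≤ bern β b * bern (if X then q else p) f * bern ps h := by
    have := bern_nonneg hβ0 hβ1 b
    have := bern_nonneg hps0 hps1 h
    have : 0 ≤ bern (if X then q else p) f := by
      split <;> exact bern_nonneg (by assumption) (by assumption) f
    positivity
  refine mul_le_mul_of_nonneg_left ?_ hw
  rcases hact with rfl | hpos
  · simp only [nextState, Bool.false_and]
    exact hV _ _ _ _ (by simp; omega)
  · have h1 : (0 < e1.val) = True := by simp [hpos]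
    have h2 : (0 < e2.val) = True := by simp [Nat.lt_of_lt_of_le hpos hle]
    simp only [nextState, h1, h2, decide_true, Bool.and_true]
    exact hV _ _ _ _ (by cases a <;> simp <;> omega)

lemma KV_true_eq_false_of_zero (Emax Dmax : ℕ) (p q β ps : ℝ)
    (V : State Emax Dmax → ℝ) (e : Fin (Emax+1)) (X : Bool) (D : Fin (Dmax+1))
    (h0 : e.val = 0) :
    KV Emax Dmax p q β ps true V (e, X, D) = KV Emax Dmax p q β ps false V (e, X, D) := by
  rw [KV_eq, KV_eq]
  refine Finset.sum_congr rfl fun b _ => Finset.sum_congr rfl fun f _ =>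
    Finset.sum_congr rfl fun h _ => ?_
  congr 1
  simp [nextState, h0]

lemma Viter_anti (Emax Dmax : ℕ) (p q β ps : ℝ)
    (hp0 : 0 ≤ p) (hp1 : p ≤ 1) (hq0 : 0 ≤ q) (hq1 : q ≤ 1)
    (hβ0 : 0 ≤ β) (hβ1 : β ≤ 1) (hps0 : 0 ≤ ps) (hps1 : ps ≤ 1) :
    ∀ (t : ℕ) (e1 e2 : Fin (Emax+1)) (X : Bool) (D : Fin (Dmax+1)),
      e1.val ≤ e2.val →
      Viter Emax Dmax p q β ps t (e2, X, D) ≤ Viter Emax Dmax p q β ps t (e1, X, D) := by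
  intro t
  induction t with
  | zero => intro _ _ _ _ _; simp [Viter]
  | succ t ih =>
    intro e1 e2 X D hle
    simp only [Viter]
    refine add_le_add le_rfl ?_
    refine le_min ?_ ?_
    · exact le_trans (min_le_left _ _)
        (KV_le_of Emax Dmax p q β ps hp0 hp1 hq0 hq1 hβ0 hβ1 hps0 hps1 _
          (fun a b c d hh => ih a b c d hh) false e1 e2 X D hle (Or.inl rfl))
    · by_cases h0 : 0 < e1.val
      · exact le_trans (min_le_right _ _)
          (KV_le_of Emax Dmax p q β ps hp0 hp1 hq0 hq1 hβ0 hβ1 hps0 hps1 _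
            (fun a b c d hh => ih a b c d hh) true e1 e2 X D hle (Or.inr h0))
      · rw [KV_true_eq_false_of_zero Emax Dmax p q β ps _ e1 X D (by omega)]
        exact le_trans (min_le_left _ _)
          (KV_le_of Emax Dmax p q β ps hp0 hp1 hq0 hq1 hβ0 hβ1 hps0 hps1 _
            (fun a b c d hh => ih a b c d hh) false e1 e2 X D hle (Or.inl rfl))

/-- **Idling is optimal at VIA = 0.**  For every value-iteration step `t`,
battery level `e ≤ E_max`, and source state `X`, one has
`ΔV_t(e,X,0) ≥ 0`: when the VIA equals `0`, not transmitting is an optimal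
action. -/
theorem advantage_nonneg_at_zero_VIA (Emax Dmax : ℕ)
    (p q β ps : ℝ) (hp0 : 0 ≤ p) (hp1 : p ≤ 1) (hq0 : 0 ≤ q) (hq1 : q ≤ 1)
    (hβ0 : 0 ≤ β) (hβ1 : β ≤ 1) (hps0 : 0 ≤ ps) (hps1 : ps ≤ 1)
    (t : ℕ) (e : ℕ) (he : e ≤ Emax) (X : Bool) :
    0 ≤ dV Emax Dmax p q β ps t (⟨e, by omega⟩, X, ⟨0, by omega⟩) := by
  rw [dV, sub_nonneg, KV_eq, KV_eq]
  refine Finset.sum_le_sum fun b _ => Finset.sum_le_sum fun f _ =>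
    Finset.sum_le_sum fun h _ => ?_
  have hw : 0 ≤ bern β b * bern (if X then q else p) f * bern ps h := by
    have := bern_nonneg hβ0 hβ1 b
    have := bern_nonneg hps0 hps1 h
    have : 0 ≤ bern (if X then q else p) f := by
      split <;> exact bern_nonneg (by assumption) (by assumption) f
    positivity
  refine mul_le_mul_of_nonneg_left ?_ hw
  by_cases h0 : 0 < e
  · have h1 : (0 < e) = True := by simp [h0]
    simp only [nextState, h1, decide_true, Bool.and_true, Bool.true_and,
      Bool.false_and]
    cases h <;> cases f <;>
      exact Viter_anti Emax Dmax p q β ps hp0 hp1 hq0 hq1 hβ0 hβ1 hps0 hps1 t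
        _ _ _ _ (by simp)
  · have h1 : (0 < e) = False := by simp; omega
    simp [nextState, h1]


end VIA
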